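/- Let D = B × C with B, C finite-dimensional, and let ψ : A⊗D → D⊗A be a twisting map. If Θ := (p_B⊗id_A)∘ψ∘(id_A⊗i_B) is a twisting map of A with B, then ψ(A⊗C) ⊆ C⊗A, where C is identified with 0×C inside D. -/
import Mathlib


open TensorProduct LinearMap

variable (K : Type*)

def IsTwistingMap {A B : Type*} [Field K] [Ring A] [Ring B] [Algebra K A] [Algebra K B]
    (χ : A ⊗[K] B →ₗ[K] B ⊗[K] A) : Prop :=
  (∀ b : B, χ ((1 : A) ⊗ₜ[K] b) = b ⊗ₜ[K] (1 : A)) ∧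
  (∀ a : A, χ (a ⊗ₜ[K] (1 : B)) = (1 : B) ⊗ₜ[K] a) ∧
  (∀ (a a' : A) (b : B),
    χ ((a * a') ⊗ₜ[K] b) =
      lTensor B (mul' K A)
        (TensorProduct.assoc K B A A
          (rTensor A χ
            ((TensorProduct.assoc K A B A).symm (a ⊗ₜ[K] χ (a' ⊗ₜ[K] b)))))) ∧
  (∀ (a : A) (b b' : B),
    χ (a ⊗ₜ[K] (b * b')) =
      rTensor A (mul' K B)
        ((TensorProduct.assoc K B B A).symm
          (lTensor B χ
            (TensorProduct.assoc K B A B (χ (a ⊗ₜ[K] b) ⊗ₜ[K] b')))))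

noncomputable def twistMul {A B : Type*} [Field K] [Ring A] [Ring B] [Algebra K A] [Algebra K B]
    (χ : A ⊗[K] B →ₗ[K] B ⊗[K] A) :
    (B ⊗[K] A) ⊗[K] (B ⊗[K] A) →ₗ[K] B ⊗[K] A :=
  TensorProduct.map (mul' K B) (mul' K A)
    ∘ₗ (TensorProduct.assoc K B B (A ⊗[K] A)).symm.toLinearMap
    ∘ₗ lTensor B (TensorProduct.assoc K B A A).toLinearMap
    ∘ₗ lTensor B (rTensor A χ)
    ∘ₗ lTensor B (TensorProduct.assoc K A B A).symm.toLinearMap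
    ∘ₗ (TensorProduct.assoc K B A (B ⊗[K] A)).toLinearMap


set_option maxHeartbeats 1000000 in
set_option synthInstance.maxHeartbeats 400000 in
private theorem extension_maps_into_C_aux {A B C : Type*} [Field K] [Ring A] [Ring B] [Ring C]
    [Algebra K A] [Algebra K B] [Algebra K C]
    (ψ : A ⊗[K] (B × C) →ₗ[K] (B × C) ⊗[K] A)
    (hu : ∀ a : A, ψ (a ⊗ₜ[K] (1 : B × C)) = (1 : B × C) ⊗ₜ[K] a)
    (hmul : ∀ (a : A) (b b' : B × C),
      ψ (a ⊗ₜ[K] (b * b')) =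
        rTensor A (mul' K (B × C))
          ((TensorProduct.assoc K (B × C) (B × C) A).symm
            (lTensor (B × C) ψ
              (TensorProduct.assoc K (B × C) A (B × C) (ψ (a ⊗ₜ[K] b) ⊗ₜ[K] b')))))
    (hΘu : ∀ a : A,
      (rTensor A (LinearMap.fst K B C) ∘ₗ ψ ∘ₗ lTensor A (LinearMap.inl K B C))
        (a ⊗ₜ[K] (1 : B)) = (1 : B) ⊗ₜ[K] a) :
    ∀ (a : A) (c : C),
      ψ (a ⊗ₜ[K] ((0, c) : B × C)) ∈
        LinearMap.range (rTensor A (LinearMap.inr K B C)) := by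
  intro a c
  have hex : Function.Exact (rTensor A (LinearMap.inr K B C)) (rTensor A (LinearMap.fst K B C)) :=
    rTensor_exact A (Function.Exact.inr_fst (R := K) (M := B) (N := C)) Prod.fst_surjective
  -- step 1 : ψ(a ⊗ (0,1)) ∈ range (rTensor inr)
  have h1 : ∀ a' : A, ψ (a' ⊗ₜ[K] ((0, 1) : B × C)) ∈
      LinearMap.range (rTensor A (LinearMap.inr K B C)) := by
    intro a'
    have hmem := (hex (ψ (a' ⊗ₜ[K] ((0, 1) : B × C)))).mp
    rw [LinearMap.mem_range]
    have hv : rTensor A (LinearMap.fst K B C) (ψ (a' ⊗ₜ[K] ((0, 1) : B × C))) = 0 := by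
      have e1 : ((0, 1) : B × C) = (1 : B × C) - ((1 : B), (0 : C)) := by
        simp [Prod.ext_iff]
      rw [e1, TensorProduct.tmul_sub, map_sub, map_sub, hu]
      have e2 : rTensor A (LinearMap.fst K B C) (ψ (a' ⊗ₜ[K] ((1 : B), (0 : C))))
          = (1 : B) ⊗ₜ[K] a' := by
        have := hΘu a'
        simpa using this
      rw [e2]
      simp
    exact hmem hv
  obtain ⟨x, hx⟩ := h1 a
  have e3 : ((0, c) : B × C) = ((0, 1) : B × C) * ((0, c) : B × C) := by
    simp [Prod.ext_iff]
  rw [e3, hmul, ← hx]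
  -- now induct on x : C ⊗ A
  clear hx
  induction x using TensorProduct.induction_on with
  | zero => simp
  | add y z hy hz =>
      rw [map_add, TensorProduct.add_tmul, map_add, map_add, map_add, map_add]
      exact Submodule.add_mem _ hy hz
  | tmul c' a' =>
      have key : ∀ z : (B × C) ⊗[K] A,
          rTensor A (mul' K (B × C))
            ((TensorProduct.assoc K (B × C) (B × C) A).symm
              (((0 : B), c') ⊗ₜ[K] z)) ∈
          LinearMap.range (rTensor A (LinearMap.inr K B C)) := by
        intro z
        induction z using TensorProduct.induction_on with
        | zero => simp
        | add u v hu' hv' =>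
            rw [TensorProduct.tmul_add, map_add, map_add]
            exact Submodule.add_mem _ hu' hv'
        | tmul d a'' =>
            refine ⟨(c' * d.2) ⊗ₜ[K] a'', ?_⟩
            have hd : ((0, c') * d : B × C) = ((0 : B), c' * d.2) := by
              rw [← Prod.mk.eta (p := d), Prod.mk_mul_mk, zero_mul]
            simp only [rTensor_tmul, TensorProduct.assoc_symm_tmul, mul'_apply, coe_inr]
            rw [hd]
      simpa [TensorProduct.assoc_tmul] using key (ψ (a' ⊗ₜ[K] ((0, c) : B × C)))

theorem extension_maps_into_C {A B C : Type*} [Field K] [Ring A] [Ring B] [Ring C]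
    [Algebra K A] [Algebra K B] [Algebra K C]
    [FiniteDimensional K B] [FiniteDimensional K C]
    (ψ : A ⊗[K] (B × C) →ₗ[K] (B × C) ⊗[K] A)
    (hψ : IsTwistingMap K ψ)
    (hΘ : IsTwistingMap K
      (rTensor A (LinearMap.fst K B C) ∘ₗ ψ ∘ₗ lTensor A (LinearMap.inl K B C))) :
    ∀ (a : A) (c : C),
      ψ (a ⊗ₜ[K] ((0, c) : B × C)) ∈
        LinearMap.range (rTensor A (LinearMap.inr K B C)) :=
  extension_maps_into_C_aux K ψ hψ.2.1 hψ.2.2.2 hΘ.2.1
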